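/- Define g(x̃) = x̃(ln(x̃(x̃²+11)/(x̃²+1)) − ln 6 − 1) + 2√11·arctan(x̃/√11) − 2·arctan(x̃) − 2√11·arctan(1/√11) + 1 + π/2 for x̃ > 0. Then g'(x̃) = ln((x̃³ + 11x̃)/(6 + 6x̃²)), and consequently g'(x̃)·(6 − 11x̃ + 6x̃² − x̃³) ≤ 0 for all x̃ > 0 with equality exactly at x̃ ∈ {1, 2, 3}. Moreover g(1) = 0. -/

import Mathlib

open Real

/-- The explicit scaling limit `g` of the non-equilibrium potential for the bistable network
`∅ ⇌ X, 2X ⇌ 3X` (rates 6, 11, 6, 1) satisfies `g'(x̃) = ln((x̃³+11x̃)/(6+6x̃²))`, hence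
`g'(x̃)·(6 − 11x̃ + 6x̃² − x̃³) ≤ 0` for `x̃ > 0` with equality exactly at `x̃ ∈ {1,2,3}`,
and `g(1) = 0`. -/
theorem stmt_14 (g : ℝ → ℝ)
    (hg : ∀ x : ℝ, g x =
      x * (Real.log (x * (x ^ 2 + 11) / (x ^ 2 + 1)) - Real.log 6 - 1)
        + 2 * Real.sqrt 11 * Real.arctan (x / Real.sqrt 11) - 2 * Real.arctan x
        - 2 * Real.sqrt 11 * Real.arctan (1 / Real.sqrt 11) + 1 + π / 2) :
    (∀ x : ℝ, 0 < x →
      HasDerivAt g (Real.log ((x ^ 3 + 11 * x) / (6 + 6 * x ^ 2))) x) ∧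
    (∀ x : ℝ, 0 < x →
      Real.log ((x ^ 3 + 11 * x) / (6 + 6 * x ^ 2)) * (6 - 11 * x + 6 * x ^ 2 - x ^ 3) ≤ 0 ∧
      (Real.log ((x ^ 3 + 11 * x) / (6 + 6 * x ^ 2)) * (6 - 11 * x + 6 * x ^ 2 - x ^ 3) = 0
        ↔ x = 1 ∨ x = 2 ∨ x = 3)) ∧
    g 1 = 0 := by
  have hs2 : Real.sqrt 11 ^ 2 = 11 := Real.sq_sqrt (by norm_num)
  have hs0 : Real.sqrt 11 ≠ 0 := by positivity
  refine ⟨?_, ?_, ?_⟩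
  · -- derivative
    intro x hx
    set g2 : ℝ → ℝ := fun u =>
      u * (Real.log u + Real.log (u ^ 2 + 11) - Real.log (u ^ 2 + 1) - Real.log 6 - 1)
        + 2 * Real.sqrt 11 * Real.arctan (u / Real.sqrt 11) - 2 * Real.arctan u
        - 2 * Real.sqrt 11 * Real.arctan (1 / Real.sqrt 11) + 1 + π / 2 with hg2
    have hx1 : (0:ℝ) < x ^ 2 + 11 := by positivity
    have hx2 : (0:ℝ) < x ^ 2 + 1 := by positivity
    have heq : g =ᶠ[nhds x] g2 := by
      filter_upwards [eventually_gt_nhds hx] with u hu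
      have h1 : (0:ℝ) < u ^ 2 + 11 := by positivity
      have h2 : (0:ℝ) < u ^ 2 + 1 := by positivity
      rw [hg u, hg2]
      rw [Real.log_div (by positivity) h2.ne', Real.log_mul hu.ne' h1.ne']
    have hL : HasDerivAt (fun u : ℝ =>
        Real.log u + Real.log (u ^ 2 + 11) - Real.log (u ^ 2 + 1) - Real.log 6 - 1)
        (1 / x + 2 * x / (x ^ 2 + 11) - 2 * x / (x ^ 2 + 1)) x := by
      have d1 : HasDerivAt (fun u : ℝ => Real.log u) (1 / x) x := by
        simpa using Real.hasDerivAt_log hx.ne'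
      have dp : HasDerivAt (fun u : ℝ => u ^ 2 + 11) (2 * x) x := by
        simpa using ((hasDerivAt_pow 2 x).add_const 11)
      have dq : HasDerivAt (fun u : ℝ => u ^ 2 + 1) (2 * x) x := by
        simpa using ((hasDerivAt_pow 2 x).add_const 1)
      have d2 : HasDerivAt (fun u : ℝ => Real.log (u ^ 2 + 11)) (2 * x / (x ^ 2 + 11)) x :=
        dp.log hx1.ne'
      have d3 : HasDerivAt (fun u : ℝ => Real.log (u ^ 2 + 1)) (2 * x / (x ^ 2 + 1)) x :=
        dq.log hx2.ne'
      exact (((d1.add d2).sub d3).sub_const _).sub_const 1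
    have hxL : HasDerivAt (fun u : ℝ =>
        u * (Real.log u + Real.log (u ^ 2 + 11) - Real.log (u ^ 2 + 1) - Real.log 6 - 1))
        (1 * (Real.log x + Real.log (x ^ 2 + 11) - Real.log (x ^ 2 + 1) - Real.log 6 - 1)
          + x * (1 / x + 2 * x / (x ^ 2 + 11) - 2 * x / (x ^ 2 + 1))) x :=
      (hasDerivAt_id x).mul hL
    have ha1 : HasDerivAt (fun u : ℝ => 2 * Real.sqrt 11 * Real.arctan (u / Real.sqrt 11))
        (2 * Real.sqrt 11 * ((1 / (1 + (x / Real.sqrt 11) ^ 2)) * (1 / Real.sqrt 11))) x := by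
      have := (Real.hasDerivAt_arctan (x / Real.sqrt 11)).comp x
        ((hasDerivAt_id x).div_const (Real.sqrt 11))
      simpa using this.const_mul (2 * Real.sqrt 11)
    have ha2 : HasDerivAt (fun u : ℝ => 2 * Real.arctan u) (2 * (1 / (1 + x ^ 2))) x :=
      (Real.hasDerivAt_arctan x).const_mul 2
    have hg2d : HasDerivAt g2
        (1 * (Real.log x + Real.log (x ^ 2 + 11) - Real.log (x ^ 2 + 1) - Real.log 6 - 1)
          + x * (1 / x + 2 * x / (x ^ 2 + 11) - 2 * x / (x ^ 2 + 1))
          + 2 * Real.sqrt 11 * ((1 / (1 + (x / Real.sqrt 11) ^ 2)) * (1 / Real.sqrt 11))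
          - 2 * (1 / (1 + x ^ 2))) x := by
      simpa [hg2] using
        ((((hxL.add ha1).sub ha2).sub_const
          (2 * Real.sqrt 11 * Real.arctan (1 / Real.sqrt 11))).add_const 1).add_const (π / 2)
    have hval : (1 * (Real.log x + Real.log (x ^ 2 + 11) - Real.log (x ^ 2 + 1) - Real.log 6 - 1)
          + x * (1 / x + 2 * x / (x ^ 2 + 11) - 2 * x / (x ^ 2 + 1))
          + 2 * Real.sqrt 11 * ((1 / (1 + (x / Real.sqrt 11) ^ 2)) * (1 / Real.sqrt 11))
          - 2 * (1 / (1 + x ^ 2)))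
        = Real.log ((x ^ 3 + 11 * x) / (6 + 6 * x ^ 2)) := by
      have hxx : (1:ℝ) + x ^ 2 ≠ 0 := by positivity
      have hrw : Real.log ((x ^ 3 + 11 * x) / (6 + 6 * x ^ 2))
          = Real.log x + Real.log (x ^ 2 + 11) - Real.log (x ^ 2 + 1) - Real.log 6 := by
        have e1 : x ^ 3 + 11 * x = x * (x ^ 2 + 11) := by ring
        have e2 : 6 + 6 * x ^ 2 = 6 * (x ^ 2 + 1) := by ring
        rw [e1, e2, Real.log_div (by positivity) (by positivity),
          Real.log_mul hx.ne' hx1.ne', Real.log_mul (by norm_num) hx2.ne']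
        ring
      rw [hrw]
      have h11 : (1:ℝ) + (x / Real.sqrt 11) ^ 2 = (11 + x ^ 2) / 11 := by
        field_simp
        linear_combination (-x ^ 2) * hs2
      rw [h11]
      have h110 : (11:ℝ) + x ^ 2 ≠ 0 := by positivity
      field_simp
      ring_nf
    exact (hval ▸ hg2d).congr_of_eventuallyEq heq
  · -- sign analysis
    intro x hx
    have hN : (0:ℝ) < x ^ 3 + 11 * x := by positivity
    have hD : (0:ℝ) < 6 + 6 * x ^ 2 := by positivity
    set L := Real.log ((x ^ 3 + 11 * x) / (6 + 6 * x ^ 2)) with hL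
    have hP : 6 - 11 * x + 6 * x ^ 2 - x ^ 3 = (6 + 6 * x ^ 2) - (x ^ 3 + 11 * x) := by ring
    have hle : L * (6 - 11 * x + 6 * x ^ 2 - x ^ 3) ≤ 0 := by
      rcases le_total (x ^ 3 + 11 * x) (6 + 6 * x ^ 2) with h | h
      · have hLle : L ≤ 0 := Real.log_nonpos (by positivity) ((div_le_one hD).mpr h)
        have : 0 ≤ 6 - 11 * x + 6 * x ^ 2 - x ^ 3 := by rw [hP]; linarith
        exact mul_nonpos_of_nonpos_of_nonneg hLle this
      · have hLge : 0 ≤ L := Real.log_nonneg ((one_le_div hD).mpr h)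
        have : 6 - 11 * x + 6 * x ^ 2 - x ^ 3 ≤ 0 := by rw [hP]; linarith
        exact mul_nonpos_of_nonneg_of_nonpos hLge this
    refine ⟨hle, ?_⟩
    have hPiff : 6 - 11 * x + 6 * x ^ 2 - x ^ 3 = 0 ↔ x = 1 ∨ x = 2 ∨ x = 3 := by
      constructor
      · intro h
        have : -((x - 1) * (x - 2) * (x - 3)) = 0 := by linarith [h]; 
        have h' : (x - 1) * (x - 2) * (x - 3) = 0 := by linarith
        rcases mul_eq_zero.mp h' with h'' | h''
        · rcases mul_eq_zero.mp h'' with h3 | h3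
          · exact Or.inl (by linarith)
          · exact Or.inr (Or.inl (by linarith))
        · exact Or.inr (Or.inr (by linarith))
      · rintro (rfl | rfl | rfl) <;> norm_num
    constructor
    · intro h
      rcases mul_eq_zero.mp h with h0 | h0
      · -- L = 0 forces N = D, hence P = 0
        have hr : (x ^ 3 + 11 * x) / (6 + 6 * x ^ 2) = 1 := by
          rcases Real.log_eq_zero.mp h0 with h1 | h1 | h1
          · exact absurd h1 (by positivity)
          · exact h1
          · exfalso; nlinarith [div_pos hN hD]
        have : x ^ 3 + 11 * x = 6 + 6 * x ^ 2 := by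
          field_simp at hr; linarith
        exact hPiff.mp (by linarith [hP])
      · exact hPiff.mp h0
    · intro h
      have := hPiff.mpr h
      rw [this, mul_zero]
  · -- g 1 = 0
    have h1 : g 1 = 1 * (Real.log (1 * ((1:ℝ) ^ 2 + 11) / ((1:ℝ) ^ 2 + 1)) - Real.log 6 - 1)
        + 2 * Real.sqrt 11 * Real.arctan (1 / Real.sqrt 11) - 2 * Real.arctan 1
        - 2 * Real.sqrt 11 * Real.arctan (1 / Real.sqrt 11) + 1 + π / 2 := hg 1
    have h2 : (1:ℝ) * ((1:ℝ) ^ 2 + 11) / ((1:ℝ) ^ 2 + 1) = 6 := by norm_num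
    rw [h1, h2, Real.arctan_one]
    ring
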